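/- Let Λ = kQ/I be a bound quiver algebra, α an arrow of Q, and suppose the quotient algebra Γ = Λ/⟨ᾱ⟩ is a monomial arrow removal of Λ, i.e. I is generated by an α-monomial set. Then Γ ≅ kQ*/I*, where Q* is the quiver Q with the arrow α removed and I* = kQ* ∩ I. Moreover, the inclusion of Q* into Q induces an algebra monomorphism ν : Γ → Λ, the projection of Q onto Q* induces an algebra epimorphism π : Λ → Γ, and π ∘ ν = id_Γ. -/

import Mathlib

/-! Scaffolding: path algebras of quivers, admissible ideals, monomial arrow removal,
admissible orders and Gröbner bases, following Green. -/

open Quiver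

/-- The type of all paths in a quiver `V` (with arbitrary source and target). -/
abbrev PathsIn (V : Type) [Quiver.{0} V] : Type := Σ a b : V, Quiver.Path a b

namespace PathsIn

variable {V : Type} [Quiver.{0} V]

/-- The length of a path. -/
def len (u : PathsIn V) : ℕ := u.2.2.length

/-- `u.Divides w` : the path `u` is a subpath of (divides) the path `w`,
i.e. `w = r·u·s` for (possibly trivial) paths `r`, `s`. -/
def Divides (u w : PathsIn V) : Prop :=
  ∃ (a d : V) (r : Quiver.Path a u.1) (s : Quiver.Path u.2.1 d),
    w = ⟨a, d, (r.comp u.2.2).comp s⟩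

/-- `u.ProperlyDivides w` : `u` is a proper subpath of `w`. -/
def ProperlyDivides (u w : PathsIn V) : Prop := u.Divides w ∧ u ≠ w

/-- `s.OverlapsLeftWith t` : the path `s` overlaps with the path `t` from the left,
i.e. `t = r₁·r₂` and `s = r₂·r₃` for paths `r₁, r₂, r₃` with `r₂` non-trivial.
(Equivalently, `t` overlaps with `s` from the right.) -/
def OverlapsLeftWith (s t : PathsIn V) : Prop :=
  ∃ (x : V) (r₁ : Quiver.Path t.1 x) (r₂ : Quiver.Path x t.2.1)
    (r₃ : Quiver.Path t.2.1 s.2.1),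
      0 < r₂.length ∧ t = ⟨t.1, t.2.1, r₁.comp r₂⟩ ∧ s = ⟨x, s.2.1, r₂.comp r₃⟩

end PathsIn

/-- The path of length one corresponding to an arrow. -/
def arrowPath {V : Type} [Quiver.{0} V] {a b : V} (α : a ⟶ b) : PathsIn V :=
  ⟨a, b, α.toPath⟩

/-- A path `w` avoids the arrow `α` if `α` is not a subpath of `w`. -/
def AvoidsArrow {V : Type} [Quiver.{0} V] {a b : V} (α : a ⟶ b) (w : PathsIn V) : Prop :=
  ¬ (arrowPath α).Divides w

/-- `IsPathAlgebra k V A` : the `k`-algebra `A` is the path algebra `kQ` of the quiver `V`: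
it has a `k`-basis indexed by the paths of `V`, multiplication of basis elements is given by
concatenation of composable paths (and is zero on non-composable ones), and the identity is
the sum of the trivial paths. -/
structure IsPathAlgebra (k : Type) [Field k] (V : Type) [Quiver.{0} V] [Fintype V]
    (A : Type) [Ring A] [Algebra k A] : Type where
  basis : Module.Basis (PathsIn V) k A
  mul_matched : ∀ {a b c : V} (p : Quiver.Path a b) (q : Quiver.Path b c),
    basis ⟨a, b, p⟩ * basis ⟨b, c, q⟩ = basis ⟨a, c, p.comp q⟩
  mul_unmatched : ∀ {a b b' c : V} (p : Quiver.Path a b) (q : Quiver.Path b' c),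
    b ≠ b' → basis ⟨a, b, p⟩ * basis ⟨b', c, q⟩ = 0
  one_def : (1 : A) = ∑ a : V, basis ⟨a, a, Quiver.Path.nil⟩

namespace IsPathAlgebra

variable {k : Type} [Field k] {V : Type} [Quiver.{0} V] [Fintype V]
  {A : Type} [Ring A] [Algebra k A]

/-- The path `u` occurs in the element `z` of the path algebra (i.e. `u` has a non-zero
coefficient in `z`). -/
def OccursIn (PA : IsPathAlgebra k V A) (u : PathsIn V) (z : A) : Prop :=
  PA.basis.repr z u ≠ 0

/-- The path `u` occurs in the subset `T` of the path algebra. -/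
def OccursInSet (PA : IsPathAlgebra k V A) (u : PathsIn V) (T : Set A) : Prop :=
  ∃ z ∈ T, PA.OccursIn u z

/-- An element of the path algebra avoids the arrow `α` if every path occurring in it does. -/
def ElemAvoids (PA : IsPathAlgebra k V A) {a b : V} (α : a ⟶ b) (z : A) : Prop :=
  ∀ u : PathsIn V, PA.OccursIn u z → AvoidsArrow α u

/-- A relation: a linear combination of paths of length at least two having a common source
and a common target. -/
def IsRelation (PA : IsPathAlgebra k V A) (z : A) : Prop :=
  (∀ u : PathsIn V, PA.OccursIn u z → 2 ≤ u.len) ∧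
  (∀ u v : PathsIn V, PA.OccursIn u z → PA.OccursIn v z → u.1 = v.1 ∧ u.2.1 = v.2.1)

end IsPathAlgebra

/-- The two-sided ideal of a ring generated by a subset, as a set: the additive closure of
the set of elements `r * t * s` with `t` in the generating set. -/
def ringIdealSpan {A : Type} [Ring A] (T : Set A) : Set A :=
  (AddSubgroup.closure {y : A | ∃ r s : A, ∃ t ∈ T, y = r * t * s} : AddSubgroup A)

/-- An admissible ideal of the path algebra: a two-sided ideal `I` with `J^n ⊆ I ⊆ J²`
for some `n`, where `J` is the arrow ideal. -/
def IsAdmissibleIdeal {k : Type} [Field k] {V : Type} [Quiver.{0} V] [Fintype V]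
    {A : Type} [Ring A] [Algebra k A] (PA : IsPathAlgebra k V A) (I : Set A) : Prop :=
  I = ringIdealSpan I ∧
  (∃ n : ℕ, ∀ u : PathsIn V, n ≤ u.len → PA.basis u ∈ I) ∧
  (∀ z ∈ I, ∀ u : PathsIn V, PA.OccursIn u z → 2 ≤ u.len)

/-- A presentation of the quotient of an algebra `A` by (the set underlying) a two-sided
ideal `I`: a surjective algebra homomorphism with kernel `I`. -/
structure QuotPresentation (k : Type) [Field k] {A : Type} [Ring A] [Algebra k A]
    (I : Set A) (B : Type) [Ring B] [Algebra k B] : Type where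
  proj : A →ₐ[k] B
  surj : Function.Surjective proj
  ker : ∀ z : A, proj z = 0 ↔ z ∈ I

section StrictMonomial

variable {k : Type} [Field k] {V : Type} [Quiver.{0} V] [Fintype V]
  {A : Type} [Ring A] [Algebra k A]

/-- The path `pαq`. -/
def pathPAQ {V : Type} [Quiver.{0} V] {va vb xp yq : V} (α : va ⟶ vb)
    (p : Quiver.Path xp va) (q : Quiver.Path vb yq) : PathsIn V :=
  ⟨xp, yq, (p.comp α.toPath).comp q⟩

/-- Properties (P) for a subset `T` of the path algebra, relative to the arrow `α` and the
paths `p`, `q`:  (P1) every element of `T` other than `pαq` avoids `α`;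
(P2) `p` does not overlap from the left with any path occurring in `T`;
(P2ᵒᵖ) `q` does not overlap from the right with any path occurring in `T`;
(P3) no path occurring in `T` divides `p` or `q`. -/
structure SatisfiesP (PA : IsPathAlgebra k V A) {va vb xp yq : V} (α : va ⟶ vb)
    (T : Set A) (p : Quiver.Path xp va) (q : Quiver.Path vb yq) : Prop where
  p1 : ∀ z ∈ T, z ≠ PA.basis (pathPAQ α p q) → PA.ElemAvoids α z
  p2 : ∀ u : PathsIn V, PA.OccursInSet u T →
    ¬ PathsIn.OverlapsLeftWith ⟨xp, va, p⟩ u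
  p2op : ∀ u : PathsIn V, PA.OccursInSet u T →
    ¬ PathsIn.OverlapsLeftWith u ⟨vb, yq, q⟩
  p3 : ∀ u : PathsIn V, PA.OccursInSet u T →
    ¬ u.Divides ⟨xp, va, p⟩ ∧ ¬ u.Divides ⟨vb, yq, q⟩

/-- The common context for (strict) `α`-monomial generating sets: `p`, `q` avoid `α`,
at most one of them is trivial, and `T` is a finite generating set of relations for `I`. -/
structure IsMonGenData (PA : IsPathAlgebra k V A) {va vb xp yq : V} (α : va ⟶ vb)
    (I : Set A) (T : Set A) (p : Quiver.Path xp va) (q : Quiver.Path vb yq) : Prop where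
  finite : T.Finite
  rels : ∀ t ∈ T, PA.IsRelation t
  gen : I = ringIdealSpan T
  p_avoids : AvoidsArrow α (⟨xp, va, p⟩ : PathsIn V)
  q_avoids : AvoidsArrow α (⟨vb, yq, q⟩ : PathsIn V)
  not_both_trivial : 0 < p.length ∨ 0 < q.length

/-- `T` is a strict `α`-monomial generating set for the ideal `I`, relative to the paths
`p` and `q`. -/
structure IsStrictMonomialGenSet (PA : IsPathAlgebra k V A) {va vb xp yq : V} (α : va ⟶ vb)
    (I : Set A) (T : Set A) (p : Quiver.Path xp va) (q : Quiver.Path vb yq) : Prop where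
  data : IsMonGenData PA α I T p q
  mem : PA.basis (pathPAQ α p q) ∈ T
  others_avoid : ∀ z ∈ T, z ≠ PA.basis (pathPAQ α p q) → PA.ElemAvoids α z
  no_proper_sub : ∀ u : PathsIn V, u.ProperlyDivides (pathPAQ α p q) → PA.basis u ∉ I
  no_overlap_p : ∀ u : PathsIn V, PA.OccursInSet u T →
    ¬ PathsIn.OverlapsLeftWith ⟨xp, va, p⟩ u
  no_overlap_q : ∀ u : PathsIn V, PA.OccursInSet u T →
    ¬ PathsIn.OverlapsLeftWith u ⟨vb, yq, q⟩
  no_divide : ∀ u : PathsIn V, PA.OccursInSet u T →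
    ¬ u.Divides ⟨xp, va, p⟩ ∧ ¬ u.Divides ⟨vb, yq, q⟩

/-- `T` is an `α`-monomial generating set: every element of `T` which is not (a scalar
multiple of) a path avoids `α`. -/
structure IsMonomialGenSet (PA : IsPathAlgebra k V A) {va vb : V} (α : va ⟶ vb)
    (I : Set A) (T : Set A) : Prop where
  finite : T.Finite
  rels : ∀ t ∈ T, PA.IsRelation t
  gen : I = ringIdealSpan T
  mono : ∀ t ∈ T, (∃ (u : PathsIn V) (c : k), c ≠ 0 ∧ t = c • PA.basis u) ∨ PA.ElemAvoids α t

end StrictMonomial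

section Groebner

variable {k : Type} [Field k] {V : Type} [Quiver.{0} V] [Fintype V]
  {A : Type} [Ring A] [Algebra k A]

/-- An admissible order on the set of paths of a quiver: a well-order compatible with left
and right multiplication, for which every subpath of a path precedes it. -/
structure AdmissibleOrder (V : Type) [Quiver.{0} V] : Type 1 where
  le : PathsIn V → PathsIn V → Prop
  refl : ∀ u, le u u
  trans : ∀ u v w, le u v → le v w → le u w
  antisymm : ∀ u v, le u v → le v u → u = v
  total : ∀ u v, le u v ∨ le v u
  wf : WellFounded (fun u w => le u w ∧ u ≠ w)
  right_compat : ∀ (u w : PathsIn V), le u w → ∀ (hc : u.2.1 = w.2.1) (z : V)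
    (r : Quiver.Path w.2.1 z),
      le ⟨u.1, z, u.2.2.comp (r.cast hc.symm rfl)⟩ ⟨w.1, z, w.2.2.comp r⟩
  left_compat : ∀ (u w : PathsIn V), le u w → ∀ (hc : u.1 = w.1) (z : V)
    (r : Quiver.Path z w.1),
      le ⟨z, u.2.1, (r.cast rfl hc.symm).comp u.2.2⟩ ⟨z, w.2.1, r.comp w.2.2⟩
  subpath_le : ∀ u w, PathsIn.Divides u w → le u w

/-- `IsTip PA O z u` : the path `u` is the `O`-largest path occurring in `z`. -/
def IsTip (PA : IsPathAlgebra k V A) (O : AdmissibleOrder V) (z : A) (u : PathsIn V) : Prop :=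
  PA.OccursIn u z ∧ ∀ w : PathsIn V, PA.OccursIn w z → O.le w u

/-- `G` is a Gröbner basis for the ideal `I` with respect to the admissible order `O`:
`G ⊆ I` and the tip of every non-zero element of `I` is divisible by the tip of some
element of `G`. -/
def IsGroebnerBasis (PA : IsPathAlgebra k V A) (O : AdmissibleOrder V)
    (I : Set A) (G : Set A) : Prop :=
  G ⊆ I ∧ ∀ z ∈ I, z ≠ 0 → ∃ g ∈ G, ∃ tg tz : PathsIn V,
    IsTip PA O g tg ∧ IsTip PA O z tz ∧ tg.Divides tz

/-- A strict `α`-monomial Gröbner basis for `I`, relative to the paths `p`, `q` (which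
avoid `α`, have the appropriate endpoints, and at most one of which is trivial):
`pαq ∈ 𝒢`, every other element of `𝒢` avoids `α`, and no tip of an element of `𝒢`
overlaps with `p` from the right, overlaps with `q` from the left, or divides `p` or `q`. -/
structure IsStrictMonomialGB (PA : IsPathAlgebra k V A) (O : AdmissibleOrder V)
    {va vb xp yq : V} (α : va ⟶ vb) (I : Set A) (G : Set A)
    (p : Quiver.Path xp va) (q : Quiver.Path vb yq) : Prop where
  gb : IsGroebnerBasis PA O I G
  p_avoids : AvoidsArrow α (⟨xp, va, p⟩ : PathsIn V)
  q_avoids : AvoidsArrow α (⟨vb, yq, q⟩ : PathsIn V)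
  not_both_trivial : 0 < p.length ∨ 0 < q.length
  mem : PA.basis (pathPAQ α p q) ∈ G
  others_avoid : ∀ z ∈ G, z ≠ PA.basis (pathPAQ α p q) → PA.ElemAvoids α z
  tips_no_overlap_p : ∀ g ∈ G, ∀ u : PathsIn V, IsTip PA O g u →
    ¬ PathsIn.OverlapsLeftWith ⟨xp, va, p⟩ u
  tips_no_overlap_q : ∀ g ∈ G, ∀ u : PathsIn V, IsTip PA O g u →
    ¬ PathsIn.OverlapsLeftWith u ⟨vb, yq, q⟩
  tips_no_divide : ∀ g ∈ G, ∀ u : PathsIn V, IsTip PA O g u →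
    ¬ u.Divides ⟨xp, va, p⟩ ∧ ¬ u.Divides ⟨vb, yq, q⟩

end Groebner

section ArrowRemoval

/-- The vertex set of the quiver `Q*` obtained from `Q` by removing the arrow `α`
(a type synonym for the vertex set of `Q`). -/
def RemoveArrow (V : Type) [Quiver.{0} V] {va vb : V} (_α : va ⟶ vb) : Type := V

variable {V : Type} [Quiver.{0} V] {va vb : V} (α : va ⟶ vb)

/-- The quiver `Q*`: the arrows of `Q` other than `α`. -/
instance : Quiver.{0} (RemoveArrow V α) :=
  ⟨fun a b => {f : (show V from a) ⟶ (show V from b) //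
    (⟨a, b, f⟩ : Σ x y : V, x ⟶ y) ≠ ⟨va, vb, α⟩}⟩

instance [Fintype V] : Fintype (RemoveArrow V α) := inferInstanceAs (Fintype V)

/-- The inclusion of the quiver `Q*` into `Q`. -/
def inclRemove : Prefunctor (RemoveArrow V α) V where
  obj := fun a => (show V from a)
  map := fun f => f.val

/-- The induced inclusion on paths. -/
def mapPathsIn (u : PathsIn (RemoveArrow V α)) : PathsIn V :=
  ⟨(inclRemove α).obj u.1, (inclRemove α).obj u.2.1, (inclRemove α).mapPath u.2.2⟩

end ArrowRemoval

/-! ### Auxiliary machinery for the proof -/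

section RingIdealSpanLemmas

variable {A : Type} [Ring A]

theorem ringIdealSpan_induction {T : Set A} {z : A} (h : z ∈ ringIdealSpan T)
    {p : A → Prop} (mem : ∀ r s t, t ∈ T → p (r * t * s)) (zero : p 0)
    (add : ∀ x y, p x → p y → p (x + y)) (neg : ∀ x, p x → p (-x)) : p z := by
  refine AddSubgroup.closure_induction ?_ zero (fun x y _ _ hx hy => add x y hx hy)
    (fun x _ hx => neg x hx) h
  rintro x ⟨r, s, t, ht, rfl⟩
  exact mem r s t ht

theorem mem_ringIdealSpan_of_gen {T : Set A} {t : A} (r s : A) (ht : t ∈ T) :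
    r * t * s ∈ ringIdealSpan T :=
  AddSubgroup.subset_closure ⟨r, s, t, ht, rfl⟩

theorem self_mem_ringIdealSpan {T : Set A} {t : A} (ht : t ∈ T) : t ∈ ringIdealSpan T := by
  have := mem_ringIdealSpan_of_gen 1 1 ht
  rwa [one_mul, mul_one] at this

theorem zero_mem_ringIdealSpan (T : Set A) : (0 : A) ∈ ringIdealSpan T :=
  (AddSubgroup.closure _).zero_mem

theorem add_mem_ringIdealSpan {T : Set A} {x y : A} (hx : x ∈ ringIdealSpan T)
    (hy : y ∈ ringIdealSpan T) : x + y ∈ ringIdealSpan T :=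
  (AddSubgroup.closure _).add_mem hx hy

theorem neg_mem_ringIdealSpan {T : Set A} {x : A} (hx : x ∈ ringIdealSpan T) :
    -x ∈ ringIdealSpan T :=
  (AddSubgroup.closure _).neg_mem hx

theorem mul_left_mem_ringIdealSpan {T : Set A} (a : A) {x : A} (hx : x ∈ ringIdealSpan T) :
    a * x ∈ ringIdealSpan T := by
  refine ringIdealSpan_induction (p := fun z => a * z ∈ ringIdealSpan T) hx
    (fun r s t ht => ?_) ?_ (fun x y hx hy => ?_) (fun x hx => ?_) <;> try dsimp only at *
  · rw [← mul_assoc, ← mul_assoc]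
    exact mem_ringIdealSpan_of_gen (a * r) s ht
  · rw [mul_zero]; exact zero_mem_ringIdealSpan T
  · rw [mul_add]; exact add_mem_ringIdealSpan hx hy
  · rw [mul_neg]; exact neg_mem_ringIdealSpan hx

theorem mul_right_mem_ringIdealSpan {T : Set A} (a : A) {x : A} (hx : x ∈ ringIdealSpan T) :
    x * a ∈ ringIdealSpan T := by
  refine ringIdealSpan_induction (p := fun z => z * a ∈ ringIdealSpan T) hx
    (fun r s t ht => ?_) ?_ (fun x y hx hy => ?_) (fun x hx => ?_) <;> try dsimp only at *
  · rw [mul_assoc (r * t) s a]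
    exact mem_ringIdealSpan_of_gen r (s * a) ht
  · rw [zero_mul]; exact zero_mem_ringIdealSpan T
  · rw [add_mul]; exact add_mem_ringIdealSpan hx hy
  · rw [neg_mul]; exact neg_mem_ringIdealSpan hx

theorem smul_mem_ringIdealSpan {k : Type} [Field k] [Algebra k A] {T : Set A} (c : k)
    {x : A} (hx : x ∈ ringIdealSpan T) : c • x ∈ ringIdealSpan T := by
  refine ringIdealSpan_induction (p := fun z => c • z ∈ ringIdealSpan T) hx
    (fun r s t ht => ?_) ?_ (fun x y hx hy => ?_) (fun x hx => ?_) <;> try dsimp only at *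
  · rw [← smul_mul_assoc, ← smul_mul_assoc]
    exact mem_ringIdealSpan_of_gen (c • r) s ht
  · rw [smul_zero]; exact zero_mem_ringIdealSpan T
  · rw [smul_add]; exact add_mem_ringIdealSpan hx hy
  · rw [smul_neg]; exact neg_mem_ringIdealSpan hx


theorem sum_mem_ringIdealSpan {A : Type} [Ring A] {T : Set A} {I : Type} (t : Finset I)
    (f : I → A) (h : ∀ i ∈ t, f i ∈ ringIdealSpan T) : (∑ i ∈ t, f i) ∈ ringIdealSpan T :=
  sum_mem h

end RingIdealSpanLemmas

section Descend

variable {k A B C : Type} [CommSemiring k] [Ring A] [Ring B] [Ring C]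
  [Algebra k A] [Algebra k B] [Algebra k C]

/-- Descend an algebra hom along a surjective algebra hom killing its kernel. -/
noncomputable def descendAlgHom (f : A →ₐ[k] B) (hf : Function.Surjective f) (g : A →ₐ[k] C)
    (hker : ∀ z, f z = 0 → g z = 0) : B →ₐ[k] C :=
  let h : B →+* C := (f.toRingHom.liftOfRightInverse (Function.surjInv hf)
    (Function.rightInverse_surjInv hf))
    ⟨g.toRingHom, fun x hx => by
      rw [RingHom.mem_ker] at hx ⊢
      exact hker x hx⟩
  { h with
    commutes' := fun c => by
      have h1 : (algebraMap k B) c = f ((algebraMap k A) c) := (f.commutes c).symm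
      show h (algebraMap k B c) = algebraMap k C c
      rw [h1]
      have h2 := RingHom.liftOfRightInverse_comp_apply f.toRingHom (Function.surjInv hf)
        (Function.rightInverse_surjInv hf)
        ⟨g.toRingHom, fun x hx => by rw [RingHom.mem_ker] at hx ⊢; exact hker x hx⟩
        ((algebraMap k A) c)
      exact h2.trans (g.commutes c) }

theorem descendAlgHom_apply (f : A →ₐ[k] B) (hf : Function.Surjective f) (g : A →ₐ[k] C)
    (hker : ∀ z, f z = 0 → g z = 0) (z : A) :
    descendAlgHom f hf g hker (f z) = g z :=
  RingHom.liftOfRightInverse_comp_apply f.toRingHom (Function.surjInv hf)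
    (Function.rightInverse_surjInv hf) _ z

end Descend

section Arrows

variable {V : Type} [Quiver.{0} V]

/-- The list of arrows of a path. -/
def pathArrows : ∀ {a b : V}, Quiver.Path a b → List (Σ x y : V, x ⟶ y)
  | _, _, .nil => []
  | _, _, .cons p f => pathArrows p ++ [⟨_, _, f⟩]

theorem pathArrows_comp {a b c : V} (p : Quiver.Path a b) (q : Quiver.Path b c) :
    pathArrows (p.comp q) = pathArrows p ++ pathArrows q := by
  induction q with
  | nil => simp [pathArrows]
  | cons q f ih => simp [pathArrows, ih]

/-- The list of arrows of an element of `PathsIn V`. -/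
def PathsIn.arrows (u : PathsIn V) : List (Σ x y : V, x ⟶ y) := pathArrows u.2.2

theorem arrows_of_divides {u w : PathsIn V} (h : u.Divides w) :
    ∃ l1 l2, w.arrows = l1 ++ u.arrows ++ l2 := by
  obtain ⟨a, d, r, s, rfl⟩ := h
  exact ⟨pathArrows r, pathArrows s, by simp [PathsIn.arrows, pathArrows_comp]⟩

theorem mem_arrows_of_not_avoids {va vb : V} {α : va ⟶ vb} {w : PathsIn V}
    (h : ¬ AvoidsArrow α w) : (⟨va, vb, α⟩ : Σ x y : V, x ⟶ y) ∈ w.arrows := by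
  rw [AvoidsArrow, not_not] at h
  obtain ⟨l1, l2, hw⟩ := arrows_of_divides h
  rw [hw]
  have : (arrowPath α).arrows = [⟨va, vb, α⟩] := by
    simp [PathsIn.arrows, arrowPath, Quiver.Hom.toPath, pathArrows]
  rw [this]
  simp

theorem not_mem_arrows_mapPath {va vb : V} (α : va ⟶ vb) :
    ∀ {a b : RemoveArrow V α} (p : Quiver.Path a b),
      (⟨va, vb, α⟩ : Σ x y : V, x ⟶ y) ∉ pathArrows ((inclRemove α).mapPath p) := by
  intro a b p
  induction p with
  | nil => simp [Prefunctor.mapPath_nil, pathArrows]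
  | cons p f ih =>
    rw [Prefunctor.mapPath_cons]
    simp only [pathArrows, List.mem_append, List.mem_singleton]
    rintro (h | h)
    · exact ih h
    · exact f.property h.symm

theorem avoids_mapPathsIn {va vb : V} (α : va ⟶ vb) (u : PathsIn (RemoveArrow V α)) :
    AvoidsArrow α (mapPathsIn α u) := by
  intro h
  have hm := mem_arrows_of_not_avoids (α := α) (w := mapPathsIn α u) (fun hav => hav h)
  exact not_mem_arrows_mapPath α u.2.2 hm

theorem not_avoids_arrowPath {va vb : V} (α : va ⟶ vb) : ¬ AvoidsArrow α (arrowPath α) := by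
  rw [AvoidsArrow, not_not]
  refine ⟨va, vb, Quiver.Path.nil, Quiver.Path.nil, ?_⟩
  show arrowPath α = ⟨va, vb, (Quiver.Path.nil.comp α.toPath).comp Quiver.Path.nil⟩
  simp [arrowPath]
  rfl

end Arrows

section BasisSum

theorem basis_sum_apply {k M N ι : Type} [Field k] [AddCommGroup M] [Module k M]
    [AddCommGroup N] [Module k N] (b : Module.Basis ι k M) (L : M →ₗ[k] N) (z : M) :
    L z = (b.repr z).sum fun i c => c • L (b i) := by
  conv_lhs => rw [← b.linearCombination_repr z, Finsupp.linearCombination_apply]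
  rw [map_finsuppSum]
  simp

end BasisSum


/-- let `Λ = kQ/I` be a bound quiver algebra, `α` an arrow of `Q`, and suppose
`Γ = Λ/⟨ᾱ⟩` is a monomial arrow removal of `Λ` (i.e. `I` is generated by an `α`-monomial
set `T`).  Then `Γ ≅ kQ*/I*`, where `Q*` is `Q` with the arrow `α` removed and
`I* = kQ* ∩ I`; moreover the inclusion of `Q*` into `Q` induces an algebra monomorphism
`ν : Γ → Λ`, the projection of `Q` onto `Q*` induces an algebra epimorphism `π : Λ → Γ`,
and `π ∘ ν = id_Γ`.  (Here `ι : kQ* → kQ` is the algebra map induced by the inclusion of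
quivers, `πQ : kQ → kQ*` the one induced by the projection of quivers, and `kQ*/I*` is
presented by an arbitrary quotient presentation `PΓs`.) -/
theorem monomial_arrow_removal_cleft
    {k : Type} [Field k] {V : Type} [Quiver.{0} V] [Fintype V]
    [∀ a b : V, Fintype (a ⟶ b)]
    {A : Type} [Ring A] [Algebra k A] (PA : IsPathAlgebra k V A)
    (I : Set A) (hI : IsAdmissibleIdeal PA I)
    {Λ : Type} [Ring Λ] [Algebra k Λ] (P : QuotPresentation k I Λ)
    {va vb : V} (α : va ⟶ vb)
    (T : Set A) (hT : IsMonomialGenSet PA α I T)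
    -- the path algebra `kQ*` of the quiver `Q* = Q \ {α}`
    {Astar : Type} [Ring Astar] [Algebra k Astar]
    (PAstar : IsPathAlgebra k (RemoveArrow V α) Astar)
    -- the algebra map induced by the inclusion of `Q*` into `Q`
    (ι : Astar →ₐ[k] A)
    (hι : ∀ u : PathsIn (RemoveArrow V α), ι (PAstar.basis u) = PA.basis (mapPathsIn α u))
    -- the algebra map induced by the projection of `Q` onto `Q*`
    (πQ : A →ₐ[k] Astar)
    (hπQ₀ : ∀ u : PathsIn V, ¬ AvoidsArrow α u → πQ (PA.basis u) = 0)
    (hπQ₁ : ∀ u : PathsIn V, AvoidsArrow α u → ι (πQ (PA.basis u)) = PA.basis u)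
    -- `Γ = Λ/⟨ᾱ⟩` and `Γ* = kQ*/I*` where `I* = kQ* ∩ I`
    {Γ : Type} [Ring Γ] [Algebra k Γ]
    (PΓ : QuotPresentation k (ringIdealSpan {P.proj (PA.basis (arrowPath α))}) Γ)
    {Γstar : Type} [Ring Γstar] [Algebra k Γstar]
    (PΓs : QuotPresentation k {z : Astar | ι z ∈ I} Γstar) :
    Nonempty (Γ ≃ₐ[k] Γstar) ∧
    (∃ ν : Γstar →ₐ[k] Λ, Function.Injective ν ∧
      (∀ z : Astar, ν (PΓs.proj z) = P.proj (ι z)) ∧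
      ∃ πh : Λ →ₐ[k] Γstar, Function.Surjective πh ∧
        (∀ z : A, πh (P.proj z) = PΓs.proj (πQ z)) ∧
        πh.comp ν = AlgHom.id k Γstar) := by
  classical
  have h0I : (0 : A) ∈ I := by rw [hT.gen]; exact zero_mem_ringIdealSpan T
  have hocc_smul : ∀ (c : k) (u w : PathsIn V), PA.OccursIn w (c • PA.basis u) → w = u := by
    intro c u w hw
    by_contra hne
    have hne' : ¬ u = w := fun h => hne h.symm
    refine hw ?_
    rw [map_smul, PA.basis.repr_self, Finsupp.smul_apply, Finsupp.single_apply, if_neg hne',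
      smul_zero]
  have hfix : ∀ z : A, PA.ElemAvoids α z → ι (πQ z) = z := by
    intro z hz
    have h1 : ι (πQ z) = (ι.comp πQ).toLinearMap z := rfl
    rw [h1, basis_sum_apply PA.basis (ι.comp πQ).toLinearMap z]
    conv_rhs => rw [← PA.basis.linearCombination_repr z, Finsupp.linearCombination_apply]
    refine Finsupp.sum_congr ?_
    intro u hu
    have hocc : PA.OccursIn u z := Finsupp.mem_support_iff.mp hu
    have h2 : (ι.comp πQ).toLinearMap (PA.basis u) = PA.basis u := hπQ₁ u (hz u hocc)
    rw [h2]
  have hιavoid : ∀ z : Astar, PA.ElemAvoids α (ι z) := by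
    intro z w hw
    have hL : PA.basis.repr (ι z) =
        (PAstar.basis.repr z).sum fun u c => c • Finsupp.single (mapPathsIn α u) (1 : k) := by
      have h1 : PA.basis.repr (ι z)
          = (PA.basis.repr.toLinearMap.comp ι.toLinearMap) z := rfl
      rw [h1, basis_sum_apply PAstar.basis _ z]
      refine Finsupp.sum_congr ?_
      intro u _
      have h2 : (PA.basis.repr.toLinearMap.comp ι.toLinearMap) (PAstar.basis u)
          = Finsupp.single (mapPathsIn α u) (1 : k) := by
        show PA.basis.repr (ι (PAstar.basis u)) = _
        rw [hι, PA.basis.repr_self]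
      rw [h2]
    have hw' : PA.basis.repr (ι z) w ≠ 0 := hw
    rw [hL, Finsupp.sum_apply, Finsupp.sum] at hw'
    obtain ⟨u, _, hne⟩ := Finset.exists_ne_zero_of_sum_ne_zero hw'
    have hwu : w = mapPathsIn α u := by
      by_contra hne2
      refine hne ?_
      rw [Finsupp.smul_apply, Finsupp.single_apply, if_neg (fun h => hne2 h.symm), smul_zero]
    rw [hwu]
    exact avoids_mapPathsIn α u
  have hbasis_mem : ∀ u : PathsIn V, ¬ AvoidsArrow α u →
      PA.basis u ∈ ringIdealSpan {PA.basis (arrowPath α)} := by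
    intro u hu
    rw [AvoidsArrow, not_not] at hu
    obtain ⟨a, d, r, s, hu⟩ := hu
    rw [hu]
    have h1 : PA.basis ⟨a, va, r⟩ * PA.basis (arrowPath α) = PA.basis ⟨a, vb, r.comp α.toPath⟩ :=
      PA.mul_matched r α.toPath
    have h2 : PA.basis ⟨a, vb, r.comp α.toPath⟩ * PA.basis ⟨vb, d, s⟩
        = PA.basis ⟨a, d, (r.comp α.toPath).comp s⟩ := PA.mul_matched _ s
    have h3 : PA.basis ⟨a, d, (r.comp (arrowPath α).2.2).comp s⟩
        = PA.basis ⟨a, va, r⟩ * PA.basis (arrowPath α) * PA.basis ⟨vb, d, s⟩ := by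
      rw [h1, h2]
      exact rfl
    rw [h3]
    exact mem_ringIdealSpan_of_gen _ _ rfl
  have hdiff : ∀ z : A, z - ι (πQ z) ∈ ringIdealSpan {PA.basis (arrowPath α)} := by
    intro z
    have h1 : z - ι (πQ z) = (LinearMap.id (R := k) (M := A) - (ι.comp πQ).toLinearMap) z := by
      simp
    rw [h1, basis_sum_apply PA.basis _ z, Finsupp.sum]
    refine sum_mem_ringIdealSpan _ _ (fun u _ => ?_)
    by_cases hav : AvoidsArrow α u
    · have h2 : (LinearMap.id (R := k) (M := A) - (ι.comp πQ).toLinearMap) (PA.basis u) = 0 := by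
        have h3 : ι (πQ (PA.basis u)) = PA.basis u := hπQ₁ u hav
        simp only [LinearMap.sub_apply, LinearMap.id_apply, AlgHom.toLinearMap_apply,
          AlgHom.comp_apply]
        rw [h3, sub_self]
      rw [h2, smul_zero]
      exact zero_mem_ringIdealSpan _
    · have h2 : (LinearMap.id (R := k) (M := A) - (ι.comp πQ).toLinearMap) (PA.basis u)
          = PA.basis u := by
        simp only [LinearMap.sub_apply, LinearMap.id_apply, AlgHom.toLinearMap_apply,
          AlgHom.comp_apply]
        rw [hπQ₀ u hav, map_zero, sub_zero]
      rw [h2]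
      exact smul_mem_ringIdealSpan _ (hbasis_mem u hav)
  have hkey : ∀ z ∈ I, ι (πQ z) ∈ I := by
    intro z hz
    rw [hT.gen] at hz ⊢
    refine ringIdealSpan_induction (p := fun z => ι (πQ z) ∈ ringIdealSpan T) hz
      (fun r s t ht => ?_) ?_ (fun x y hx hy => ?_) (fun x hx => ?_) <;> try dsimp only at *
    · rw [map_mul, map_mul, map_mul, map_mul]
      refine mul_right_mem_ringIdealSpan _ (mul_left_mem_ringIdealSpan _ ?_)
      rcases hT.mono t ht with ⟨u, c, _, rfl⟩ | havd
      · by_cases hav : AvoidsArrow α u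
        · have hel : PA.ElemAvoids α (c • PA.basis u) := by
            intro w hw; rw [hocc_smul c u w hw]; exact hav
          rw [hfix _ hel]
          exact self_mem_ringIdealSpan ht
        · rw [map_smul, hπQ₀ u hav, smul_zero, map_zero]
          exact zero_mem_ringIdealSpan T
      · rw [hfix t havd]
        exact self_mem_ringIdealSpan ht
    · rw [map_zero, map_zero]; exact zero_mem_ringIdealSpan T
    · rw [map_add, map_add]; exact add_mem_ringIdealSpan hx hy
    · rw [map_neg, map_neg]; exact neg_mem_ringIdealSpan hx
  let ν : Γstar →ₐ[k] Λ := descendAlgHom PΓs.proj PΓs.surj (P.proj.comp ι)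
    (fun z hz => (P.ker _).mpr ((PΓs.ker z).mp hz))
  have hν : ∀ z : Astar, ν (PΓs.proj z) = P.proj (ι z) := fun z =>
    descendAlgHom_apply _ _ _ _ z
  let πh : Λ →ₐ[k] Γstar := descendAlgHom P.proj P.surj (PΓs.proj.comp πQ)
    (fun z hz => (PΓs.ker _).mpr (hkey z ((P.ker z).mp hz)))
  have hπh : ∀ z : A, πh (P.proj z) = PΓs.proj (πQ z) := fun z =>
    descendAlgHom_apply _ _ _ _ z
  have hcomp : πh.comp ν = AlgHom.id k Γstar := by
    apply AlgHom.ext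
    intro γ
    obtain ⟨z, rfl⟩ := PΓs.surj γ
    show πh (ν (PΓs.proj z)) = PΓs.proj z
    rw [hν, hπh]
    have h1 : PΓs.proj (πQ (ι z) - z) = 0 := by
      refine (PΓs.ker _).mpr ?_
      show ι (πQ (ι z) - z) ∈ I
      rw [map_sub, hfix (ι z) (hιavoid z), sub_self]
      exact h0I
    rw [map_sub] at h1
    exact sub_eq_zero.mp h1
  have hretr : ∀ γ : Γstar, πh (ν γ) = γ := fun γ => AlgHom.congr_fun hcomp γ
  have hinj : Function.Injective ν := fun a b h => by
    rw [← hretr a, ← hretr b, h]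
  have hsurj : Function.Surjective πh := fun γ => ⟨ν γ, hretr γ⟩
  have hπhα : πh (P.proj (PA.basis (arrowPath α))) = 0 := by
    rw [hπh, hπQ₀ _ (not_avoids_arrowPath α), map_zero]
  have hker2 : ∀ w : Λ, w ∈ ringIdealSpan {P.proj (PA.basis (arrowPath α))} → πh w = 0 := by
    intro w hw
    refine ringIdealSpan_induction (p := fun w => πh w = 0) hw (fun r s t ht => ?_) ?_
      (fun x y hx hy => ?_) (fun x hx => ?_) <;> try dsimp only at *
    · rw [Set.mem_singleton_iff] at ht
      rw [map_mul, map_mul, ht, hπhα, mul_zero, zero_mul]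
    · exact map_zero _
    · rw [map_add, hx, hy, add_zero]
    · rw [map_neg, hx, neg_zero]
  have hker1 : ∀ w : Λ, πh w = 0 → w ∈ ringIdealSpan {P.proj (PA.basis (arrowPath α))} := by
    intro w hw
    obtain ⟨z, rfl⟩ := P.surj w
    rw [hπh] at hw
    have hzI : ι (πQ z) ∈ I := (PΓs.ker _).mp hw
    have h1 : P.proj (ι (πQ z)) = 0 := (P.ker _).mpr hzI
    have h2 : P.proj z = P.proj (z - ι (πQ z)) := by rw [map_sub, h1, sub_zero]
    rw [h2]
    refine ringIdealSpan_induction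
      (p := fun x => P.proj x ∈ ringIdealSpan {P.proj (PA.basis (arrowPath α))}) (hdiff z)
      (fun r s t ht => ?_) ?_ (fun x y hx hy => ?_) (fun x hx => ?_) <;> try dsimp only at *
    · rw [Set.mem_singleton_iff] at ht
      rw [map_mul, map_mul, ht]
      exact mem_ringIdealSpan_of_gen _ _ rfl
    · rw [map_zero]; exact zero_mem_ringIdealSpan _
    · rw [map_add]; exact add_mem_ringIdealSpan hx hy
    · rw [map_neg]; exact neg_mem_ringIdealSpan hx
  let f : Γ →ₐ[k] Γstar := descendAlgHom PΓ.proj PΓ.surj πh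
    (fun w hw => hker2 w ((PΓ.ker w).mp hw))
  let g : Γstar →ₐ[k] Γ := descendAlgHom πh hsurj PΓ.proj
    (fun w hw => (PΓ.ker w).mpr (hker1 w hw))
  have hf : ∀ w : Λ, f (PΓ.proj w) = πh w := fun w => descendAlgHom_apply _ _ _ _ w
  have hg : ∀ w : Λ, g (πh w) = PΓ.proj w := fun w => descendAlgHom_apply _ _ _ _ w
  refine ⟨⟨AlgEquiv.ofAlgHom f g ?_ ?_⟩, ν, hinj, hν, πh, hsurj, hπh, hcomp⟩
  · apply AlgHom.ext
    intro γ
    obtain ⟨w, rfl⟩ := hsurj γ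
    show f (g (πh w)) = πh w
    rw [hg, hf]
  · apply AlgHom.ext
    intro γ
    obtain ⟨w, rfl⟩ := PΓ.surj γ
    show g (f (PΓ.proj w)) = PΓ.proj w
    rw [hf, hg]
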